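/- For all sufficiently large $n$, there exists a bipartite graph $G_0 = (A \cup B, E_0)$ with $|A| = |B| = n$ such that there are no subsets $A' \subseteq A$, $B' \subseteq B$ with $|A'| = |B'| = \lfloor 2\log_2 n \rfloor$ inducing either a complete bipartite graph or an empty bipartite graph between $A'$ and $B'$. -/

import Mathlib

private lemma two_pow_le_factorial_succ : ∀ m : ℕ, 2 ^ m ≤ (m + 1).factorial
  | 0 => le_refl 1
  | m + 1 => by
    calc 2 ^ (m + 1) = 2 ^ m * 2 := pow_succ 2 m
    _ ≤ (m + 1).factorial * (m + 2) :=
        Nat.mul_le_mul (two_pow_le_factorial_succ m) (by omega)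
    _ = (m + 2).factorial := by rw [Nat.mul_comm]; exact (Nat.factorial_succ (m + 1)).symm

private lemma arith_key (n k : ℕ) (hk : 3 ≤ k) (hn2 : n ^ 2 < 2 ^ (k + 1)) :
    2 * n.choose k ^ 2 < 2 ^ (k ^ 2) := by
  obtain ⟨m, rfl⟩ : ∃ m, k = m + 3 := ⟨k - 3, by omega⟩
  set k := m + 3 with hkdef
  have hfac : 2 ^ (m + 2) ≤ k.factorial := two_pow_le_factorial_succ (m + 2)
  have h1 : n.choose k * k.factorial ≤ n ^ k := by
    calc n.choose k * k.factorial = k.factorial * n.choose k := Nat.mul_comm _ _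
    _ = n.descFactorial k := (Nat.descFactorial_eq_factorial_mul_choose n k).symm
    _ ≤ n ^ k := Nat.descFactorial_le_pow n k
  have hstep : 2 * n.choose k ^ 2 * (2 ^ (m + 2)) ^ 2 < 2 ^ (k ^ 2) * (2 ^ (m + 2)) ^ 2 := by
    calc 2 * n.choose k ^ 2 * (2 ^ (m + 2)) ^ 2 = 2 * (n.choose k * 2 ^ (m + 2)) ^ 2 := by ring
    _ ≤ 2 * (n.choose k * k.factorial) ^ 2 := by gcongr
    _ ≤ 2 * (n ^ k) ^ 2 := by gcongr
    _ = 2 * (n ^ 2) ^ k := by rw [← pow_mul, ← pow_mul, Nat.mul_comm k 2]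
    _ < 2 * (2 ^ (k + 1)) ^ k := by
        have h := Nat.pow_lt_pow_left hn2 (show k ≠ 0 by omega)
        omega
    _ = 2 ^ ((k + 1) * k + 1) := by rw [← pow_mul]; ring
    _ ≤ 2 ^ (k ^ 2 + (m + 2) * 2) := by
        apply Nat.pow_le_pow_right (by norm_num)
        nlinarith
    _ = 2 ^ (k ^ 2) * (2 ^ (m + 2)) ^ 2 := by rw [pow_add, pow_mul]
  exact Nat.lt_of_mul_lt_mul_right hstep

set_option maxHeartbeats 2000000 in
private lemma count_mono (n kk : ℕ) (A' B' : Finset (Fin n)) (hA : A'.card = kk)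
    (hB : B'.card = kk) (c : Bool) :
    (Finset.univ.filter fun f : Fin n → Fin n → Bool =>
      ∀ a ∈ A', ∀ b ∈ B', f a b = c).card ≤ 2 ^ (n * n - kk * kk) := by
  classical
  set S : Finset (Fin n × Fin n) := A' ×ˢ B' with hS
  have hScard : S.card = kk * kk := by simp [hS, hA, hB]
  have hle : (Finset.univ.filter fun f : Fin n → Fin n → Bool =>
      ∀ a ∈ A', ∀ b ∈ B', f a b = c).card ≤ (Finset.univ : Finset (↥(Sᶜ) → Bool)).card := by
    apply Finset.card_le_card_of_injOn
      (fun f : Fin n → Fin n → Bool => fun x : ↥(Sᶜ) => f x.1.1 x.1.2)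
      (fun _ _ => Finset.mem_univ _)
    intro f hf g hg h
    simp only [Finset.coe_filter, Set.mem_setOf_eq, Finset.mem_univ, true_and] at hf hg
    funext a b
    by_cases hab : (a, b) ∈ S
    · have hmem := Finset.mem_product.mp hab
      rw [hf a hmem.1 b hmem.2, hg a hmem.1 b hmem.2]
    · exact congrFun h ⟨(a, b), Finset.mem_compl.mpr hab⟩
  calc _ ≤ (Finset.univ : Finset (↥(Sᶜ) → Bool)).card := hle
  _ = Fintype.card (↥(Sᶜ) → Bool) := Finset.card_univ
  _ = 2 ^ (Sᶜ).card := by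
      rw [Fintype.card_fun, Fintype.card_coe, Fintype.card_bool]
  _ = 2 ^ (n * n - kk * kk) := by
      congr 1
      rw [Finset.card_compl, hScard, Fintype.card_prod, Fintype.card_fin]

set_option maxHeartbeats 2000000 in
/-- For all sufficiently large `n`, there is a bipartite graph with parts of size `n`
(given by an adjacency relation `E : Fin n → Fin n → Prop`) containing no complete and
no empty bipartite subgraph with both sides of size `⌊2 log₂ n⌋`. -/
theorem stmt9 : ∃ N : ℕ, ∀ n : ℕ, N ≤ n →
    ∃ E : Fin n → Fin n → Prop,
      ∀ A' B' : Finset (Fin n),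
        A'.card = ⌊2 * Real.logb 2 n⌋₊ → B'.card = ⌊2 * Real.logb 2 n⌋₊ →
        ¬ ((∀ a ∈ A', ∀ b ∈ B', E a b) ∨ (∀ a ∈ A', ∀ b ∈ B', ¬ E a b)) := by
  classical
  refine ⟨16, fun n hn => ?_⟩
  set k := ⌊2 * Real.logb 2 n⌋₊ with hkdef
  by_cases hkn : k ≤ n
  swap
  · refine ⟨fun _ _ => True, fun A' B' hA _ _ => hkn ?_⟩
    calc k = A'.card := hA.symm
    _ ≤ (Finset.univ : Finset (Fin n)).card := Finset.card_le_univ _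
    _ = n := by simp
  have hn0 : (0 : ℝ) < n := by exact_mod_cast (by omega : 0 < n)
  have hn16 : (16 : ℝ) ≤ n := by exact_mod_cast hn
  have hlogb16 : Real.logb 2 16 = 4 := by
    rw [show (16 : ℝ) = 2 ^ (4 : ℕ) by norm_num, Real.logb_pow,
      Real.logb_self_eq_one (by norm_num : (1:ℝ) < 2)]
    norm_num
  have hk8 : 8 ≤ k := by
    apply Nat.le_floor
    have h := Real.logb_le_logb_of_le (by norm_num : (1:ℝ) < 2) (by norm_num) hn16
    rw [hlogb16] at h
    push_cast
    linarith
  have hk3 : 3 ≤ k := by omega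
  have hn2 : n ^ 2 < 2 ^ (k + 1) := by
    have hfl : 2 * Real.logb 2 n < (k : ℝ) + 1 := Nat.lt_floor_add_one _
    have h1 : ((n : ℝ)) ^ 2 = (2 : ℝ) ^ (2 * Real.logb 2 n) := by
      rw [mul_comm, Real.rpow_mul (by norm_num : (0:ℝ) ≤ 2),
        Real.rpow_logb (by norm_num) (by norm_num) hn0,
        show (2 : ℝ) = ((2 : ℕ) : ℝ) by norm_num, Real.rpow_natCast]
    have h2 : (2 : ℝ) ^ (2 * Real.logb 2 n) < (2 : ℝ) ^ (((k + 1 : ℕ)) : ℝ) := by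
      apply (Real.rpow_lt_rpow_left_iff (by norm_num : (1:ℝ) < 2)).mpr
      push_cast
      linarith
    have h3 : (2 : ℝ) ^ (((k + 1 : ℕ)) : ℝ) = ((2 ^ (k + 1) : ℕ) : ℝ) := by
      rw [Real.rpow_natCast]
      push_cast
      ring
    have : ((n : ℝ)) ^ 2 < ((2 ^ (k + 1) : ℕ) : ℝ) := by rw [h1, ← h3]; exact h2
    exact_mod_cast this
  have harith : 2 * n.choose k ^ 2 < 2 ^ (k ^ 2) := arith_key n k hk3 hn2
  set P := Finset.powersetCard k (Finset.univ : Finset (Fin n)) with hP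
  set Bad : Finset (Fin n → Fin n → Bool) := Finset.univ.filter fun f =>
    ∃ A' B' : Finset (Fin n), A'.card = k ∧ B'.card = k ∧
      ((∀ a ∈ A', ∀ b ∈ B', f a b = true) ∨ (∀ a ∈ A', ∀ b ∈ B', f a b = false)) with hBad
  have hsub : Bad ⊆ (P ×ˢ P).biUnion fun p => Finset.univ.filter fun f =>
      (∀ a ∈ p.1, ∀ b ∈ p.2, f a b = true) ∨ (∀ a ∈ p.1, ∀ b ∈ p.2, f a b = false) := by
    intro f hf
    simp only [hBad, Finset.mem_filter, Finset.mem_univ, true_and] at hf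
    obtain ⟨A', B', hA, hB, hmono⟩ := hf
    apply Finset.mem_biUnion.mpr
    refine ⟨(A', B'), ?_, ?_⟩
    · exact Finset.mem_product.mpr ⟨Finset.mem_powersetCard.mpr ⟨Finset.subset_univ _, hA⟩,
        Finset.mem_powersetCard.mpr ⟨Finset.subset_univ _, hB⟩⟩
    · exact Finset.mem_filter.mpr ⟨Finset.mem_univ _, hmono⟩
  have hBadcard : Bad.card ≤ (n.choose k * n.choose k) *
      (2 ^ (n * n - k * k) + 2 ^ (n * n - k * k)) := by
    calc Bad.card ≤ ((P ×ˢ P).biUnion fun p => Finset.univ.filter fun f : Fin n → Fin n → Bool =>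
        (∀ a ∈ p.1, ∀ b ∈ p.2, f a b = true) ∨ (∀ a ∈ p.1, ∀ b ∈ p.2, f a b = false)).card :=
        Finset.card_le_card hsub
    _ ≤ ∑ p ∈ P ×ˢ P, (Finset.univ.filter fun f : Fin n → Fin n → Bool =>
        (∀ a ∈ p.1, ∀ b ∈ p.2, f a b = true) ∨ (∀ a ∈ p.1, ∀ b ∈ p.2, f a b = false)).card :=
        Finset.card_biUnion_le
    _ ≤ ∑ _p ∈ P ×ˢ P, (2 ^ (n * n - k * k) + 2 ^ (n * n - k * k)) := by
        apply Finset.sum_le_sum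
        intro p hp
        rw [Finset.mem_product] at hp
        obtain ⟨h1, h2⟩ := hp
        rw [Finset.mem_powersetCard] at h1 h2
        rw [Finset.filter_or]
        calc _ ≤ (Finset.univ.filter fun f : Fin n → Fin n → Bool =>
              ∀ a ∈ p.1, ∀ b ∈ p.2, f a b = true).card +
            (Finset.univ.filter fun f : Fin n → Fin n → Bool =>
              ∀ a ∈ p.1, ∀ b ∈ p.2, f a b = false).card := Finset.card_union_le _ _
        _ ≤ 2 ^ (n * n - k * k) + 2 ^ (n * n - k * k) :=
            Nat.add_le_add (count_mono n k p.1 p.2 h1.2 h2.2 true)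
              (count_mono n k p.1 p.2 h1.2 h2.2 false)
    _ = (n.choose k * n.choose k) * (2 ^ (n * n - k * k) + 2 ^ (n * n - k * k)) := by
        rw [Finset.sum_const, Finset.card_product, smul_eq_mul]
        congr 1
        simp [hP, Finset.card_powersetCard]
  have hBadlt : Bad.card < Fintype.card (Fin n → Fin n → Bool) := by
    have hcard : Fintype.card (Fin n → Fin n → Bool) = 2 ^ (n * n) := by
      simp [← pow_mul]
    rw [hcard]
    calc Bad.card ≤ (n.choose k * n.choose k) *
        (2 ^ (n * n - k * k) + 2 ^ (n * n - k * k)) := hBadcard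
    _ = (2 * n.choose k ^ 2) * 2 ^ (n * n - k * k) := by ring
    _ < 2 ^ (k ^ 2) * 2 ^ (n * n - k * k) :=
        Nat.mul_lt_mul_of_lt_of_le harith le_rfl (Nat.pow_pos (by norm_num))
    _ = 2 ^ (n * n) := by
        rw [← pow_add]
        congr 1
        have hkk : k * k ≤ n * n := Nat.mul_le_mul hkn hkn
        rw [sq]
        omega
  obtain ⟨f, hf⟩ : ∃ f : Fin n → Fin n → Bool, f ∉ Bad := by
    by_contra h
    push_neg at h
    have : (Finset.univ : Finset (Fin n → Fin n → Bool)) ⊆ Bad := fun f _ => h f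
    have := Finset.card_le_card this
    rw [Finset.card_univ] at this
    omega
  refine ⟨fun a b => f a b = true, fun A' B' hA hB hcon => ?_⟩
  apply hf
  simp only [hBad, Finset.mem_filter, Finset.mem_univ, true_and]
  refine ⟨A', B', hA, hB, ?_⟩
  rcases hcon with h | h
  · exact Or.inl h
  · exact Or.inr fun a ha b hb => by simpa using h a ha b hb
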